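/- If a partition P of {1, ..., n} maximizes the vector-partition objective ∑_{B ∈ P} ‖S_B‖² over all partitions of {1, ..., n} (with respect to given vectors v_1, ..., v_n ∈ ℝ^d), then for every two distinct blocks B and B' of P, the inner product of their sum points satisfies ⟨S_B, S_{B'}⟩ ≤ 0. -/
import Mathlib


open Finset
open scoped RealInnerProductSpace

/-- The vector-partition objective: sum over blocks of the squared norm of the
block's sum point `S_B = ∑ i ∈ B, v i`. -/
noncomputable def vpObj {n d : ℕ} (v : Fin n → EuclideanSpace ℝ (Fin d))
    (P : Finpartition (Finset.univ : Finset (Fin n))) : ℝ :=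
  ∑ B ∈ P.parts, ‖∑ i ∈ B, v i‖ ^ 2

/-- If a partition maximizes the vector-partition objective, then the sum points of
any two distinct blocks have nonpositive inner product. -/
theorem inner_sumPoints_nonpos_of_max {n d : ℕ} (v : Fin n → EuclideanSpace ℝ (Fin d))
    (P : Finpartition (Finset.univ : Finset (Fin n)))
    (hP : ∀ Q : Finpartition (Finset.univ : Finset (Fin n)), vpObj v Q ≤ vpObj v P) :
    ∀ B ∈ P.parts, ∀ B' ∈ P.parts, B ≠ B' →
      ⟪∑ i ∈ B, v i, ∑ i ∈ B', v i⟫ ≤ 0 := by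
  intro B hB B' hB' hne
  have hdisj : Disjoint B B' := P.disjoint hB hB' hne
  have hBne : B ≠ ⊥ := P.ne_bot hB
  have hB'ne : B' ≠ ⊥ := P.ne_bot hB'
  set rest : Finset (Finset (Fin n)) := (P.parts.erase B).erase B' with hrest
  have hmemrest : ∀ C ∈ rest, C ∈ P.parts ∧ C ≠ B ∧ C ≠ B' := by
    intro C hC
    simp only [hrest, mem_erase] at hC
    exact ⟨hC.2.2, hC.2.1, hC.1⟩
  have hnotmem : B ∪ B' ∉ rest := by
    intro h
    obtain ⟨hCP, hCB, _⟩ := hmemrest _ h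
    have := P.disjoint hB hCP (Ne.symm hCB)
    have hsub : B ⊆ B ∪ B' := subset_union_left
    have : B ⊆ ∅ := by
      intro x hx
      exact (Finset.disjoint_left.mp this hx (hsub hx)).elim
    exact hBne (Finset.subset_empty.mp this)
  set parts' : Finset (Finset (Fin n)) := insert (B ∪ B') rest with hparts'
  have hsupindep : parts'.SupIndep id := by
    rw [Finset.supIndep_iff_pairwiseDisjoint]
    intro x hx y hy hxy
    simp only [hparts', coe_insert, Set.mem_insert_iff, mem_coe] at hx hy
    have key : ∀ C ∈ rest, Disjoint (B ∪ B') C := by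
      intro C hC
      obtain ⟨hCP, hCB, hCB'⟩ := hmemrest _ hC
      exact Finset.disjoint_union_left.mpr
        ⟨P.disjoint hB hCP (Ne.symm hCB), P.disjoint hB' hCP (Ne.symm hCB')⟩
    rcases hx with rfl | hx
    · rcases hy with rfl | hy
      · exact absurd rfl hxy
      · exact key _ hy
    · rcases hy with rfl | hy
      · exact (key _ hx).symm
      · exact P.disjoint (hmemrest _ hx).1 (hmemrest _ hy).1 hxy
  have hsup : parts'.sup id = (Finset.univ : Finset (Fin n)) := by
    apply Finset.eq_univ_iff_forall.mpr
    intro x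
    obtain ⟨C, hC, hxC⟩ := P.exists_mem (Finset.mem_univ x)
    rw [Finset.mem_sup]
    by_cases h1 : C = B
    · exact ⟨B ∪ B', mem_insert_self _ _, Finset.mem_union_left _ (h1 ▸ hxC)⟩
    by_cases h2 : C = B'
    · exact ⟨B ∪ B', mem_insert_self _ _, Finset.mem_union_right _ (h2 ▸ hxC)⟩
    · exact ⟨C, mem_insert_of_mem (by simp [hrest, mem_erase, h1, h2, hC]), hxC⟩
  have hbot : ⊥ ∉ parts' := by
    simp only [hparts', mem_insert]
    rintro (h | h)
    · apply hBne
      have : B ⊆ (⊥ : Finset (Fin n)) := h ▸ (subset_union_left : B ⊆ B ∪ B')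
      exact Finset.subset_empty.mp this
    · exact P.bot_notMem (hmemrest _ h).1
  set Q : Finpartition (Finset.univ : Finset (Fin n)) :=
    ⟨parts', hsupindep, hsup, hbot⟩ with hQ
  have hsum : ∑ i ∈ B ∪ B', v i = (∑ i ∈ B, v i) + ∑ i ∈ B', v i :=
    Finset.sum_union hdisj
  have hQobj : vpObj v Q = ‖(∑ i ∈ B, v i) + ∑ i ∈ B', v i‖ ^ 2
      + ∑ C ∈ rest, ‖∑ i ∈ C, v i‖ ^ 2 := by
    simp only [vpObj, hQ, hparts']
    rw [Finset.sum_insert hnotmem, hsum]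
  have hPobj : vpObj v P = ‖∑ i ∈ B, v i‖ ^ 2 + ‖∑ i ∈ B', v i‖ ^ 2
      + ∑ C ∈ rest, ‖∑ i ∈ C, v i‖ ^ 2 := by
    have h1 : B' ∈ P.parts.erase B := Finset.mem_erase.mpr ⟨Ne.symm hne, hB'⟩
    rw [vpObj, ← Finset.add_sum_erase _ _ hB, ← Finset.add_sum_erase _ _ h1, hrest]
    ring
  have hexp : ‖(∑ i ∈ B, v i) + ∑ i ∈ B', v i‖ ^ 2
      = ‖∑ i ∈ B, v i‖ ^ 2 + 2 * ⟪∑ i ∈ B, v i, ∑ i ∈ B', v i⟫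
        + ‖∑ i ∈ B', v i‖ ^ 2 := norm_add_sq_real _ _
  have := hP Q
  rw [hQobj, hPobj, hexp] at this
  linarith
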